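/- arXiv:2209.12017 — 2 statements merged into one kernel-verified Lean document; each statement's English description precedes it below -/
import Mathlib

section
/- Let P ⪰ 0 and R ⪰ 0 be symmetric n×n matrices. Then (I + PR)^{-1}P is symmetric and positive semidefinite. Hence if Q ⪰ 0, the Riccati update P' = Q + Aᵀ(I + PR)^{-1}PA is symmetric positive semidefinite, so the backward recursion P_t = Q_t + A_tᵀ(I + P_{t+1}R_t)^{-1}P_{t+1}A_t preserves symmetry and positive semidefiniteness. -/
open Matrix

theorem riccati_update_preserves_psd
    (n : ℕ) (P R Q A : Matrix (Fin n) (Fin n) ℝ)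
    (hP : P.PosSemidef) (hR : R.PosSemidef) (hQ : Q.PosSemidef) :
    ((1 + P * R)⁻¹ * P).PosSemidef ∧
    (Q + Aᵀ * (1 + P * R)⁻¹ * P * A).PosSemidef := by
  set S := open scoped MatrixOrder in CFC.sqrt P with hS
  have hSpsd : S.PosSemidef := open scoped MatrixOrder in (CFC.sqrt_nonneg P).posSemidef
  have hSS : S * S = P := open scoped MatrixOrder in CFC.sqrt_mul_sqrt_self P hP.nonneg
  have hSH : Sᵀ = S := by simpa using hSpsd.isHermitian.eq
  have hSRS : (S * R * S).PosSemidef := by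
    simpa [hSH, Matrix.mul_assoc] using hR.conjTranspose_mul_mul_same S
  have hM : (1 + S * R * S).PosDef := Matrix.PosDef.add_posSemidef Matrix.PosDef.one hSRS
  have hMunit : IsUnit (1 + S * R * S) := hM.isUnit
  have hdet : IsUnit (1 + P * R).det := by
    have : (1 + P * R).det = (1 + S * R * S).det := by
      rw [← hSS]
      calc (1 + S * S * R).det = (1 + S * (S * R)).det := by rw [Matrix.mul_assoc]
        _ = (1 + S * R * S).det := by rw [Matrix.det_one_add_mul_comm, Matrix.mul_assoc]
    rw [this]
    exact hM.det_pos.ne'.isUnit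
  have key : (1 + P * R) * (S * (1 + S * R * S)⁻¹ * S) = P := by
    have h1 : (1 + P * R) * S = S * (1 + S * R * S) := by
      rw [← hSS]; simp [Matrix.add_mul, Matrix.mul_add, Matrix.mul_assoc]
    calc (1 + P * R) * (S * (1 + S * R * S)⁻¹ * S)
        = ((1 + P * R) * S) * ((1 + S * R * S)⁻¹ * S) := by
          simp only [Matrix.mul_assoc]
      _ = S * ((1 + S * R * S) * (1 + S * R * S)⁻¹) * S := by
          rw [h1]; simp only [Matrix.mul_assoc]
      _ = P := by rw [Matrix.mul_nonsing_inv _ (isUnit_iff_isUnit_det _ |>.1 hMunit)]; simp [hSS]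
  have heq : (1 + P * R)⁻¹ * P = S * (1 + S * R * S)⁻¹ * S := by
    calc (1 + P * R)⁻¹ * P
        = (1 + P * R)⁻¹ * ((1 + P * R) * (S * (1 + S * R * S)⁻¹ * S)) := by rw [key]
      _ = S * (1 + S * R * S)⁻¹ * S := by
          rw [← Matrix.mul_assoc, Matrix.nonsing_inv_mul _ hdet, Matrix.one_mul]
  have hpsd : ((1 + P * R)⁻¹ * P).PosSemidef := by
    rw [heq]
    have := (hM.posSemidef.inv).conjTranspose_mul_mul_same S
    simpa [hSH, Matrix.mul_assoc] using this
  refine ⟨hpsd, hQ.add ?_⟩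
  have := hpsd.conjTranspose_mul_mul_same A
  simpa [Matrix.mul_assoc, Matrix.conjTranspose_eq_transpose_of_trivial] using this
end

section
/- Let f : ℝ^r → ℝ be convex and differentiable, let η(k) > 0 satisfy ∑_k η(k) = ∞ and ∑_k η(k)² < ∞, and suppose the gradients along the iterates are uniformly bounded: ‖∇f(θ(k))‖ ≤ C for all k. If f attains its minimum at some θ*, then the gradient descent iterates θ(k+1) = θ(k) − η(k)∇f(θ(k)) satisfy liminf_{k→∞} f(θ(k)) = f(θ*). -/
open Filter InnerProductSpace

/-- First-order condition for convex differentiable functions. -/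
lemma convex_first_order {E : Type*} [NormedAddCommGroup E] [InnerProductSpace ℝ E]
    [CompleteSpace E] (f : E → ℝ) (hconv : ConvexOn ℝ Set.univ f)
    (hdiff : Differentiable ℝ f) (x y : E) :
    f x + ⟪gradient f x, y - x⟫_ℝ ≤ f y := by
  set g : ℝ → ℝ := fun t => f (x + t • (y - x)) with hg
  have hgconv : ConvexOn ℝ Set.univ g := by
    have := hconv.comp_affineMap (AffineMap.lineMap x y : ℝ →ᵃ[ℝ] E)
    simp only [Set.preimage_univ] at this
    refine (show g = f ∘ AffineMap.lineMap x y from ?_) ▸ this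
    funext t
    simp [g, AffineMap.lineMap_apply, vsub_eq_sub, vadd_eq_add]
    rw [add_comm]
  have hline : HasDerivAt (fun t : ℝ => x + t • (y - x)) (y - x) 0 := by
    have h1 : HasDerivAt (fun t : ℝ => t • (y - x)) ((1 : ℝ) • (y - x)) 0 :=
      (hasDerivAt_id 0).smul_const (y - x)
    simpa using h1.const_add x
  have hgd : HasDerivAt g (⟪gradient f x, y - x⟫_ℝ) 0 := by
    have hf : HasFDerivAt f (fderiv ℝ f x) (x + (0 : ℝ) • (y - x)) := by
      simpa using (hdiff x).hasFDerivAt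
    have := hf.comp_hasDerivAt 0 hline
    have heq : fderiv ℝ f x (y - x) = ⟪gradient f x, y - x⟫_ℝ := by
      rw [gradient, InnerProductSpace.toDual_symm_apply]
    rw [heq] at this
    exact this
  have hslope := hgconv.le_slope_of_hasDerivAt (Set.mem_univ (0 : ℝ))
    (Set.mem_univ (1 : ℝ)) one_pos hgd
  have h0 : g 0 = f x := by simp [g]
  have h1 : g 1 = f y := by simp [g]
  rw [slope_def_field, h0, h1] at hslope
  norm_num at hslope
  have heq2 : ⟪gradient f x, y - x⟫_ℝ = fderiv ℝ f x y - fderiv ℝ f x x := by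
    rw [gradient, InnerProductSpace.toDual_symm_apply, map_sub]
  linarith

theorem gradient_descent_diminishing_liminf
    (r : ℕ) (f : EuclideanSpace ℝ (Fin r) → ℝ)
    (hconv : ConvexOn ℝ Set.univ f) (hdiff : Differentiable ℝ f)
    (η : ℕ → ℝ) (hηpos : ∀ k, 0 < η k)
    (hηsum : ¬ Summable η) (hηsq : Summable (fun k => η k ^ 2))
    (θ : ℕ → EuclideanSpace ℝ (Fin r)) (C : ℝ)
    (hbound : ∀ k, ‖gradient f (θ k)‖ ≤ C)
    (θstar : EuclideanSpace ℝ (Fin r)) (hmin : ∀ y, f θstar ≤ f y)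
    (hupdate : ∀ k, θ (k + 1) = θ k - η k • gradient f (θ k)) :
    Filter.liminf (fun k => f (θ k)) Filter.atTop = f θstar := by
  set g : ℕ → EuclideanSpace ℝ (Fin r) := fun k => gradient f (θ k) with hgdef
  set a : ℕ → ℝ := fun k => ‖θ k - θstar‖ ^ 2 with hadef
  set b : ℕ → ℝ := fun k => f (θ k) - f θstar with hbdef
  have hbnonneg : ∀ k, 0 ≤ b k := fun k => sub_nonneg.2 (hmin _)
  have hanonneg : ∀ k, 0 ≤ a k := fun k => sq_nonneg _
  have hC : 0 ≤ C := le_trans (norm_nonneg _) (hbound 0)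
  -- key recursion
  have key : ∀ k, a (k + 1) ≤ a k - 2 * η k * b k + η k ^ 2 * C ^ 2 := by
    intro k
    have hfo := convex_first_order f hconv hdiff (θ k) θstar
    have hinner : b k ≤ ⟪θ k - θstar, g k⟫_ℝ := by
      have h2 : ⟪g k, θstar - θ k⟫_ℝ = -⟪θ k - θstar, g k⟫_ℝ := by
        rw [real_inner_comm, ← inner_neg_left, neg_sub]
      rw [h2] at hfo
      simp only [hbdef]; linarith
    have hexp : a (k + 1) = a k - 2 * (η k * ⟪θ k - θstar, g k⟫_ℝ) + η k ^ 2 * ‖g k‖ ^ 2 := by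
      have hth : θ (k + 1) - θstar = (θ k - θstar) - η k • g k := by
        rw [hupdate k]; abel
      simp only [hadef]
      rw [hth, norm_sub_sq_real, real_inner_smul_right, norm_smul]
      simp [mul_pow, sq_abs]
      try ring
    have hgn : ‖g k‖ ^ 2 ≤ C ^ 2 := by
      have := hbound k
      nlinarith [norm_nonneg (g k)]
    have hη := (hηpos k).le
    nlinarith [mul_le_mul_of_nonneg_left hinner (mul_nonneg (by norm_num : (0:ℝ) ≤ 2) hη),
      mul_le_mul_of_nonneg_left hgn (sq_nonneg (η k))]
  -- frequently claim
  have hfreq : ∀ ε > 0, ∃ᶠ k in atTop, f (θ k) < f θstar + ε := by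
    intro ε hε
    by_contra hcon
    rw [Filter.not_frequently] at hcon
    simp only [not_lt] at hcon
    rw [Filter.eventually_atTop] at hcon
    obtain ⟨N, hN⟩ := hcon
    have hbε : ∀ k ≥ N, ε ≤ b k := fun k hk => by
      have := hN k hk; simp only [hbdef]; linarith
    set S := ∑' k, η k ^ 2 with hS
    have hsqle : ∀ M, ∑ k ∈ Finset.Ico N (N + M), η k ^ 2 ≤ S :=
      fun M => Summable.sum_le_tsum _ (fun i _ => sq_nonneg _) hηsq
    -- telescoping
    have htel : ∀ M, a (N + M) + 2 * ε * ∑ k ∈ Finset.Ico N (N + M), η k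
        ≤ a N + C ^ 2 * ∑ k ∈ Finset.Ico N (N + M), η k ^ 2 := by
      intro M
      induction M with
      | zero => simp
      | succ M ih =>
        have hk := key (N + M)
        have hb := hbε (N + M) (Nat.le_add_right _ _)
        rw [show N + (M + 1) = (N + M) + 1 by ring,
          Finset.sum_Ico_succ_top (Nat.le_add_right _ _),
          Finset.sum_Ico_succ_top (Nat.le_add_right _ _)]
        have hη := (hηpos (N + M)).le
        nlinarith [mul_le_mul_of_nonneg_left hb (mul_nonneg (by norm_num : (0:ℝ) ≤ 2) hη)]
    have hbound' : ∀ M, ∑ i ∈ Finset.range M, η (N + i) ≤ (a N + C ^ 2 * S) / (2 * ε) := by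
      intro M
      have heq : ∑ i ∈ Finset.range M, η (N + i) = ∑ k ∈ Finset.Ico N (N + M), η k := by
        rw [Finset.sum_Ico_eq_sum_range]
        simp
      rw [heq, le_div_iff₀ (by positivity)]
      have h1 := htel M
      have h2 := hsqle M
      have h3 := hanonneg (N + M)
      nlinarith [hC]
    have hsum2 : Summable (fun i => η (N + i)) :=
      summable_of_sum_range_le (fun i => (hηpos _).le) hbound'
    have hsum3 : Summable (fun i => η (i + N)) := by
      simpa [add_comm] using hsum2
    exact hηsum ((summable_nat_add_iff N).1 hsum3)
  -- conclude about liminf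
  have hmem : f θstar ∈ {a : ℝ | ∀ᶠ k in atTop, a ≤ f (θ k)} :=
    Filter.Eventually.of_forall (fun k => hmin _)
  have hub : ∀ ε > 0, ∀ x ∈ {a : ℝ | ∀ᶠ k in atTop, a ≤ f (θ k)}, x ≤ f θstar + ε := by
    intro ε hε x hx
    obtain ⟨k, hk1, hk2⟩ := ((hfreq ε hε).and_eventually hx).exists
    exact le_of_lt (lt_of_le_of_lt hk2 hk1)
  rw [Filter.liminf_eq]
  apply le_antisymm
  · apply csSup_le ⟨f θstar, hmem⟩
    intro x hx
    by_contra hlt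
    push_neg at hlt
    have := hub ((x - f θstar) / 2) (by linarith) x hx
    linarith
  · exact le_csSup ⟨f θstar + 1, hub 1 one_pos⟩ hmem
end
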